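/- Let M be a topological 2-manifold, φ a flow on M, and C ⊆ M a countable set. Then the saturation ⋃_{t ∈ ℝ} φ(t, C) is meager in M, and its complement is a dense Gδ subset of M. -/

import Mathlib

open Set Topology

/-- `M` is a topological 2-manifold: a Hausdorff, second-countable space in which every point
has an open neighborhood homeomorphic to an open subset of `ℝ²`. -/
def IsTwoManifold (M : Type*) [TopologicalSpace M] : Prop :=
  T2Space M ∧ SecondCountableTopology M ∧
    ∀ x : M, ∃ U : Set M, x ∈ U ∧ IsOpen U ∧
      ∃ V : Set (ℝ × ℝ), IsOpen V ∧ Nonempty (U ≃ₜ V)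


/-- One-sided IVT contradiction: a continuous injective function on `[-r, r]` cannot have
`u 0` strictly below both endpoint values. -/
lemma aux_not_below {u : ℝ → ℝ} {r : ℝ} (hr : 0 < r)
    (hc : ContinuousOn u (Icc (-r) r)) (hi : InjOn u (Icc (-r) r))
    (h1 : u 0 < u (-r)) (h2 : u 0 < u r) : False := by
  have hmem0 : (0 : ℝ) ∈ Icc (-r) r := ⟨by linarith, hr.le⟩
  set t : ℝ := (u 0 + min (u (-r)) (u r)) / 2 with ht
  have hmin : u 0 < min (u (-r)) (u r) := lt_min h1 h2
  have htc : u 0 < t := by simp only [ht]; linarith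
  have hta : t ≤ u (-r) := by
    have := min_le_left (u (-r)) (u r); simp only [ht]; linarith
  have htb : t ≤ u r := by
    have := min_le_right (u (-r)) (u r); simp only [ht]; linarith
  have hsub1 : uIcc (-r) (0:ℝ) ⊆ Icc (-r) r := by
    rw [uIcc_of_le (by linarith : (-r:ℝ) ≤ 0)]
    exact Icc_subset_Icc le_rfl hr.le
  have hsub2 : uIcc (0:ℝ) r ⊆ Icc (-r) r := by
    rw [uIcc_of_le hr.le]
    exact Icc_subset_Icc (by linarith) le_rfl
  have h1' : t ∈ u '' uIcc (-r) 0 := by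
    apply intermediate_value_uIcc (hc.mono hsub1)
    exact Set.mem_uIcc.2 (Or.inr ⟨htc.le, hta⟩)
  have h2' : t ∈ u '' uIcc 0 r := by
    apply intermediate_value_uIcc (hc.mono hsub2)
    exact Set.mem_uIcc.2 (Or.inl ⟨htc.le, htb⟩)
  obtain ⟨s₁, hs₁, hus₁⟩ := h1'
  obtain ⟨s₂, hs₂, hus₂⟩ := h2'
  have hseq : s₁ = s₂ := hi (hsub1 hs₁) (hsub2 hs₂) (hus₁.trans hus₂.symm)
  rw [uIcc_of_le (by linarith : (-r:ℝ) ≤ 0)] at hs₁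
  rw [uIcc_of_le hr.le] at hs₂
  have : s₁ = 0 := le_antisymm hs₁.2 (hseq ▸ hs₂.1)
  rw [this] at hus₁
  exact absurd hus₁ (by linarith)

lemma aux_between {u : ℝ → ℝ} {r : ℝ} (hr : 0 < r)
    (hc : ContinuousOn u (Icc (-r) r)) (hi : InjOn u (Icc (-r) r)) :
    u 0 < max (u (-r)) (u r) := by
  have hmem0 : (0 : ℝ) ∈ Icc (-r) r := ⟨by linarith, hr.le⟩
  have hmeml : (-r : ℝ) ∈ Icc (-r) r := ⟨le_rfl, by linarith⟩
  have hmemr : (r : ℝ) ∈ Icc (-r) r := ⟨by linarith, le_rfl⟩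
  have hne1 : u (-r) ≠ u 0 := fun h => by
    have := hi hmeml hmem0 h; linarith
  have hne2 : u r ≠ u 0 := fun h => by
    have := hi hmemr hmem0 h; linarith
  by_contra h
  push_neg at h
  rw [max_le_iff] at h
  have h1 : u (-r) < u 0 := lt_of_le_of_ne h.1 hne1
  have h2 : u r < u 0 := lt_of_le_of_ne h.2 hne2
  exact aux_not_below (u := fun s => -u s) hr hc.neg
    (fun a ha b hb hab => hi ha hb (neg_injective hab))
    (by simpa using h1) (by simpa using h2)

/-- There is no continuous injective real-valued function on a nonempty open subset of `ℝ²`. -/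
lemma no_inj_of_open {B : Set (ℝ × ℝ)} (hB : IsOpen B) (hne : B.Nonempty)
    {g : ℝ × ℝ → ℝ} (hg : ContinuousOn g B) (hinj : InjOn g B) : False := by
  obtain ⟨x, hx⟩ := hne
  obtain ⟨r₀, hr₀, hball⟩ := Metric.isOpen_iff.1 hB x hx
  set r : ℝ := r₀ / 2 with hrdef
  have hr : 0 < r := by positivity
  set γh : ℝ → ℝ × ℝ := fun s => (x.1 + s, x.2) with hγh
  set γv : ℝ → ℝ × ℝ := fun s => (x.1, x.2 + s) with hγv
  have hmemh : ∀ s ∈ Icc (-r) r, γh s ∈ B := by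
    intro s hs
    apply hball
    rw [Metric.mem_ball, Prod.dist_eq]
    have : |s| ≤ r := abs_le.2 ⟨hs.1, hs.2⟩
    simp only [hγh, Real.dist_eq, add_sub_cancel_left, sub_self, abs_zero]
    calc max |s| 0 = |s| := max_eq_left (abs_nonneg s)
      _ < r₀ := by rw [hrdef] at this; linarith
  have hmemv : ∀ s ∈ Icc (-r) r, γv s ∈ B := by
    intro s hs
    apply hball
    rw [Metric.mem_ball, Prod.dist_eq]
    have : |s| ≤ r := abs_le.2 ⟨hs.1, hs.2⟩
    simp only [hγv, Real.dist_eq, add_sub_cancel_left, sub_self, abs_zero]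
    calc max 0 |s| = |s| := max_eq_right (abs_nonneg s)
      _ < r₀ := by rw [hrdef] at this; linarith
  set u : ℝ → ℝ := fun s => g (γh s) with hu
  set v : ℝ → ℝ := fun s => g (γv s) with hv
  have hγhc : Continuous γh := by fun_prop
  have hγvc : Continuous γv := by fun_prop
  have huc : ContinuousOn u (Icc (-r) r) :=
    hg.comp hγhc.continuousOn hmemh
  have hvc : ContinuousOn v (Icc (-r) r) :=
    hg.comp hγvc.continuousOn hmemv
  have hui : InjOn u (Icc (-r) r) := by
    intro a ha b hb hab
    have := hinj (hmemh a ha) (hmemh b hb) hab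
    simpa [hγh, Prod.ext_iff] using this
  have hvi : InjOn v (Icc (-r) r) := by
    intro a ha b hb hab
    have := hinj (hmemv a ha) (hmemv b hb) hab
    simpa [hγv, Prod.ext_iff] using this
  have hu0 : u 0 = g x := by simp [hu, hγh]
  have hv0 : v 0 = g x := by simp [hv, hγv]
  have hub := aux_between hr huc hui
  have hvb := aux_between hr hvc hvi
  -- pick `t` strictly between `g x` and both maxima
  set t : ℝ := (g x + min (max (u (-r)) (u r)) (max (v (-r)) (v r))) / 2 with htdef
  have hgt : g x < t := by
    have h1 : g x < max (u (-r)) (u r) := hu0 ▸ hub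
    have h2 : g x < max (v (-r)) (v r) := hv0 ▸ hvb
    have := lt_min h1 h2
    simp only [htdef]; linarith
  have htu : t < max (u (-r)) (u r) := by
    have h1 : g x < max (u (-r)) (u r) := hu0 ▸ hub
    have h2 : g x < max (v (-r)) (v r) := hv0 ▸ hvb
    have h3 := min_le_left (max (u (-r)) (u r)) (max (v (-r)) (v r))
    have := lt_min h1 h2
    simp only [htdef]; linarith
  have htv : t < max (v (-r)) (v r) := by
    have h1 : g x < max (u (-r)) (u r) := hu0 ▸ hub
    have h2 : g x < max (v (-r)) (v r) := hv0 ▸ hvb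
    have h3 := min_le_right (max (u (-r)) (u r)) (max (v (-r)) (v r))
    have := lt_min h1 h2
    simp only [htdef]; linarith
  have himg : ∀ w : ℝ → ℝ, ContinuousOn w (Icc (-r) r) → w 0 = g x →
      t < max (w (-r)) (w r) → t ∈ w '' Icc (-r) r := by
    intro w hwc hw0 hwt
    rcases le_total (w (-r)) (w r) with hle | hle
    · rw [max_eq_right hle] at hwt
      have hsub : uIcc (0:ℝ) r ⊆ Icc (-r) r := by
        rw [uIcc_of_le hr.le]; exact Icc_subset_Icc (by linarith) le_rfl
      have := intermediate_value_uIcc (hwc.mono hsub)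
        (mem_uIcc_of_le (by rw [hw0]; exact hgt.le) hwt.le)
      exact (image_mono hsub) this
    · rw [max_eq_left hle] at hwt
      have hsub : uIcc (0:ℝ) (-r) ⊆ Icc (-r) r := by
        rw [uIcc_of_ge (by linarith : (-r:ℝ) ≤ 0)]
        exact Icc_subset_Icc le_rfl hr.le
      have := intermediate_value_uIcc (hwc.mono hsub)
        (mem_uIcc_of_le (by rw [hw0]; exact hgt.le) hwt.le)
      exact (image_mono hsub) this
  obtain ⟨s₁, hs₁, hts₁⟩ := himg u huc hu0 htu
  obtain ⟨s₂, hs₂, hts₂⟩ := himg v hvc hv0 htv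
  have := hinj (hmemh s₁ hs₁) (hmemv s₂ hs₂) (hts₁.trans hts₂.symm)
  have hs10 : s₁ = 0 := by
    simpa [hγh, hγv, Prod.ext_iff] using congrArg Prod.fst this
  rw [hs10, hu0] at hts₁
  exact absurd hts₁ (by linarith)

/-- In a 2-manifold, the image of a compact set of reals under a continuous map injective on it
has empty interior. -/
lemma interior_image_empty {M : Type*} [TopologicalSpace M] (hM : IsTwoManifold M)
    {f : ℝ → M} (hf : Continuous f) {K : Set ℝ} (hK : IsCompact K) (hinj : InjOn f K) :
    interior (f '' K) = ∅ := by
  haveI := hM.1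
  by_contra hne
  obtain ⟨x₀, hx₀⟩ := nonempty_iff_ne_empty.2 hne
  obtain ⟨U, hx₀U, hU, V, hV, ⟨h⟩⟩ := hM.2.2 x₀
  set P : Set M := f '' K with hP
  -- homeomorphism from P to a subset of ℝ
  haveI : CompactSpace ↥K := isCompact_iff_compactSpace.mp hK
  set f' : ↥K → M := K.restrict f with hf'
  have hf'c : Continuous f' := hf.comp continuous_subtype_val
  have hf'i : Function.Injective f' := fun a b hab => Subtype.ext (hinj a.2 b.2 hab)
  have hce := hf'c.isClosedEmbedding hf'i
  have hrange : range f' = P := range_restrict f K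
  set e : ↥K ≃ₜ ↥P := (hce.isEmbedding.toHomeomorph).trans
    (Homeomorph.setCongr hrange) with he
  set ψ : ↥P → ℝ := fun p => (e.symm p : ℝ) with hψ
  have hψc : Continuous ψ := continuous_subtype_val.comp e.symm.continuous
  have hψi : Function.Injective ψ := fun a b hab =>
    e.symm.injective (Subtype.ext hab)
  -- the open set B in ℝ²
  set B : Set (ℝ × ℝ) := Subtype.val '' (⇑h '' ((Subtype.val : ↥U → M) ⁻¹' interior P)) with hB
  have hBopen : IsOpen B :=
    hV.isOpenMap_subtype_val _ (h.isOpenMap _ (isOpen_interior.preimage continuous_subtype_val))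
  have hBne : B.Nonempty := ⟨(h ⟨x₀, hx₀U⟩ : ℝ × ℝ), ⟨h ⟨x₀, hx₀U⟩, ⟨⟨x₀, hx₀U⟩, hx₀, rfl⟩, rfl⟩⟩
  have hBV : B ⊆ V := by rintro y ⟨w, _, rfl⟩; exact w.2
  have hmem : ∀ y (hy : y ∈ B), ((h.symm ⟨y, hBV hy⟩ : ↥U) : M) ∈ P := by
    rintro y ⟨w, ⟨z, hz, rfl⟩, rfl⟩
    have hw : (⟨(h z : ↥V).val, hBV ⟨h z, ⟨z, hz, rfl⟩, rfl⟩⟩ : ↥V) = h z := Subtype.ext rfl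
    rw [hw, h.symm_apply_apply]
    exact interior_subset hz
  classical
  set g : ℝ × ℝ → ℝ := fun y =>
    if hy : y ∈ B then ψ ⟨((h.symm ⟨y, hBV hy⟩ : ↥U) : M), hmem y hy⟩ else 0 with hg
  have hrestrict : B.domRestrict g =
      fun y : ↥B => ψ ⟨((h.symm ⟨y.1, hBV y.2⟩ : ↥U) : M), hmem y.1 y.2⟩ :=
    funext fun y => dif_pos y.2
  have hgc : ContinuousOn g B := by
    rw [continuousOn_iff_continuous_restrict, hrestrict]
    apply hψc.comp
    apply Continuous.subtype_mk
    exact continuous_subtype_val.comp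
      (h.symm.continuous.comp (Continuous.subtype_mk continuous_subtype_val _))
  have hgi : InjOn g B := by
    intro a ha b hb hab
    rw [hg] at hab
    simp only [dif_pos ha, dif_pos hb] at hab
    have h1 := hψi hab
    rw [Subtype.mk.injEq] at h1
    have h2 : (⟨a, hBV ha⟩ : ↥V) = ⟨b, hBV hb⟩ := h.symm.injective (Subtype.ext h1)
    exact Subtype.ext_iff.1 h2
  exact no_inj_of_open hBopen hBne hgc hgi

/-- Every orbit of a flow is covered by countably many images of compact sets on which the
orbit map is injective. -/
lemma orbit_decomp {M : Type*} [TopologicalSpace M] [T2Space M] (φ : Flow ℝ M) (c : M) :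
    ∃ F : ℕ → Set ℝ, (∀ n, IsCompact (F n) ∧ InjOn (fun t => φ t c) (F n)) ∧
      range (fun t => φ t c) ⊆ ⋃ n, (fun t => φ t c) '' F n := by
  set G : AddSubgroup ℝ :=
    { carrier := {t : ℝ | φ t c = c}
      add_mem' := by
        intro a b ha hb
        simp only [mem_setOf_eq] at *
        rw [φ.map_add, hb, ha]
      zero_mem' := φ.map_zero_apply c
      neg_mem' := by
        intro a ha
        simp only [mem_setOf_eq] at *
        conv_lhs => rw [← ha]
        rw [← φ.map_add, neg_add_cancel, φ.map_zero_apply] } with hG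
  have hGmem : ∀ t : ℝ, t ∈ G ↔ φ t c = c := fun t => Iff.rfl
  have hshift : ∀ s t : ℝ, φ s c = φ t c ↔ s - t ∈ G := by
    intro s t
    constructor
    · intro h
      rw [hGmem]
      have : φ (s - t) c = φ (-t) (φ s c) := by
        rw [← φ.map_add]; ring_nf
      rw [this, h, ← φ.map_add, neg_add_cancel, φ.map_zero_apply]
    · intro h
      rw [hGmem] at h
      have : φ s c = φ t (φ (s - t) c) := by
        rw [← φ.map_add]; ring_nf
      rw [this, h]
  rcases G.dense_or_cyclic with hd | ⟨a, ha⟩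
  · -- dense subgroup: the orbit is a single point
    have hGclosed : IsClosed (G : Set ℝ) :=
      isClosed_eq (φ.continuous continuous_id continuous_const) continuous_const
    have hGall : ∀ t : ℝ, φ t c = c := by
      intro t
      have huniv : (G : Set ℝ) = univ := hGclosed.closure_eq ▸ hd.closure_eq
      have : t ∈ (G : Set ℝ) := by rw [huniv]; trivial
      exact (hGmem t).1 this
    refine ⟨fun _ => {0}, fun n => ⟨isCompact_singleton,
      Set.Subsingleton.injOn subsingleton_singleton _⟩, ?_⟩
    rintro x ⟨t, rfl⟩
    refine mem_iUnion.2 ⟨0, ⟨0, rfl, ?_⟩⟩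
    simp [hGall]
  · rcases eq_or_ne a 0 with rfl | hane
    · -- trivial group: the orbit map is injective
      have hinj : ∀ s t : ℝ, φ s c = φ t c → s = t := by
        intro s t h
        have := (hshift s t).1 h
        rw [ha, AddSubgroup.mem_closure_singleton] at this
        obtain ⟨k, hk⟩ := this
        have : s - t = 0 := by rw [← hk]; simp
        linarith [sub_eq_zero.1 this]
      refine ⟨fun n => Icc (-(n : ℝ)) n, fun n => ⟨isCompact_Icc,
        fun s _ t _ h => hinj s t h⟩, ?_⟩
      rintro x ⟨t, rfl⟩
      refine mem_iUnion.2 ⟨⌈|t|⌉₊, ⟨t, ?_, rfl⟩⟩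
      have h1 : |t| ≤ (⌈|t|⌉₊ : ℝ) := Nat.le_ceil _
      exact ⟨by linarith [abs_le.1 (le_refl |t|), neg_abs_le t], le_trans (le_abs_self t) h1⟩
    · -- nontrivial cyclic group: the orbit is covered by two injective arcs
      set q : ℝ := |a| with hq
      have hqpos : 0 < q := abs_pos.2 hane
      have hqG : q ∈ G := by
        rcases abs_choice a with h | h
        · rw [hq, h]; exact ha ▸ AddSubgroup.subset_closure rfl
        · rw [hq, h]; exact neg_mem (ha ▸ AddSubgroup.subset_closure rfl)
      have hGchar : ∀ t ∈ G, ∃ k : ℤ, t = k • a := by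
        intro t ht
        rw [ha, AddSubgroup.mem_closure_singleton] at ht
        obtain ⟨k, hk⟩ := ht
        exact ⟨k, hk.symm⟩
      -- injectivity on intervals of length q/2
      have hinjIcc : ∀ x : ℝ, InjOn (fun t => φ t c) (Icc x (x + q / 2)) := by
        intro x s hs t ht h
        have hst := (hshift s t).1 h
        obtain ⟨k, hk⟩ := hGchar _ hst
        have habs : |s - t| ≤ q / 2 := by
          rw [abs_le]; constructor <;>
            [linarith [hs.1, hs.2, ht.1, ht.2]; linarith [hs.1, hs.2, ht.1, ht.2]]
        rcases eq_or_ne k 0 with rfl | hk0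
        · have : s - t = 0 := by rw [hk]; simp
          linarith [sub_eq_zero.1 this]
        · exfalso
          have h1 : (1 : ℝ) ≤ |(k : ℝ)| := by
            exact_mod_cast Int.one_le_abs hk0
          have h2 : |s - t| = |(k : ℝ)| * q := by
            rw [hk, zsmul_eq_mul, abs_mul, hq]
          nlinarith
      refine ⟨fun n => if n = 0 then Icc 0 (q / 2) else Icc (q / 2) q, fun n => ?_, ?_⟩
      · rcases eq_or_ne n 0 with rfl | hn
        · simp only [if_pos rfl]
          exact ⟨isCompact_Icc, by simpa using hinjIcc 0⟩
        · simp only [if_neg hn]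
          refine ⟨isCompact_Icc, ?_⟩
          have := hinjIcc (q / 2)
          rw [add_halves] at this
          exact this
      · rintro x ⟨t, rfl⟩
        -- reduce t mod q into [0, q)
        set k : ℤ := ⌊t / q⌋ with hk
        set s : ℝ := t - k * q with hs
        have h2 : (k : ℝ) * q ≤ t := by
          have h3 := Int.floor_le (t / q)
          have h4 := mul_le_mul_of_nonneg_right h3 hqpos.le
          rwa [div_mul_cancel₀ _ (ne_of_gt hqpos)] at h4
        have h5 : t < (k : ℝ) * q + q := by
          have h3 := Int.lt_floor_add_one (t / q)
          have h4 := mul_lt_mul_of_pos_right h3 hqpos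
          rw [div_mul_cancel₀ _ (ne_of_gt hqpos), add_mul, one_mul] at h4
          exact h4
        have hs0 : 0 ≤ s := by rw [hs]; linarith
        have hsq : s < q := by rw [hs]; linarith
        have hfeq : φ t c = φ s c := by
          rw [hshift]
          have he1 : t - s = (k : ℝ) * q := by rw [hs]; ring
          have he2 : ((k : ℝ)) * q = k • q := by simp [zsmul_eq_mul]
          rw [he1, he2]
          exact zsmul_mem hqG k
        rcases le_total s (q / 2) with hhalf | hhalf
        · refine mem_iUnion.2 ⟨0, ⟨s, ?_, hfeq.symm⟩⟩
          simp only [if_pos rfl]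
          exact ⟨hs0, hhalf⟩
        · refine mem_iUnion.2 ⟨1, ⟨s, ?_, hfeq.symm⟩⟩
          simp only [if_neg one_ne_zero]
          exact ⟨hhalf, hsq.le⟩

lemma twoManifold_weaklyLocallyCompact {M : Type*} [TopologicalSpace M] (hM : IsTwoManifold M) :
    WeaklyLocallyCompactSpace M := by
  constructor
  intro x
  obtain ⟨U, hxU, hU, V, hV, ⟨h⟩⟩ := hM.2.2 x
  haveI : LocallyCompactSpace ↥V := hV.locallyCompactSpace
  obtain ⟨K', hK'c, hK'nhds⟩ := exists_compact_mem_nhds (h ⟨x, hxU⟩)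
  set F : ↥V → M := fun v => ((h.symm v : ↥U) : M) with hF
  have hFc : Continuous F := continuous_subtype_val.comp h.symm.continuous
  have hFopen : IsOpenMap F := (hU.isOpenMap_subtype_val).comp h.symm.isOpenMap
  refine ⟨F '' K', hK'c.image hFc, ?_⟩
  have := hFopen.image_mem_nhds hK'nhds
  have hFx : F (h ⟨x, hxU⟩) = x := by simp [hF]
  rwa [hFx] at this

/-- The saturation of a countable set under a flow on a topological 2-manifold is meager,
and its complement is a dense Gδ set. -/
theorem saturation_of_countable_isMeagre
    {M : Type*} [TopologicalSpace M] (hM : IsTwoManifold M)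
    (φ : Flow ℝ M) (C : Set M) (hC : C.Countable) :
    IsMeagre (⋃ t : ℝ, (fun x => φ t x) '' C) ∧
      Dense (⋃ t : ℝ, (fun x => φ t x) '' C)ᶜ ∧
      IsGδ (⋃ t : ℝ, (fun x => φ t x) '' C)ᶜ := by
  haveI := hM.1
  haveI := hM.2.1
  haveI := twoManifold_weaklyLocallyCompact hM
  haveI := hC.to_subtype
  choose F hFprop hFcover using fun c : ↥C => orbit_decomp φ c.1
  set T : ↥C × ℕ → Set M := fun p => (fun t => φ t p.1.1) '' F p.1 p.2 with hT
  have hSeq : (⋃ t : ℝ, (fun x => φ t x) '' C) = ⋃ p : ↥C × ℕ, T p := by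
    ext x
    simp only [mem_iUnion, mem_image]
    constructor
    · rintro ⟨t, c, hc, rfl⟩
      have := hFcover ⟨c, hc⟩ (mem_range_self t)
      rw [mem_iUnion] at this
      obtain ⟨n, s, hs, heq⟩ := this
      exact ⟨(⟨c, hc⟩, n), s, hs, heq⟩
    · rintro ⟨⟨c, n⟩, s, hs, rfl⟩
      exact ⟨s, c.1, c.2, rfl⟩
  have hTclosed : ∀ p, IsClosed (T p) :=
    fun p => (((hFprop p.1 p.2).1.image (φ.continuous continuous_id continuous_const))).isClosed
  have hTint : ∀ p, interior (T p) = ∅ := fun p =>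
    interior_image_empty hM (φ.continuous continuous_id continuous_const)
      (hFprop p.1 p.2).1 (hFprop p.1 p.2).2
  have hTmeagre : ∀ p, (T p)ᶜ ∈ residual M := fun p =>
    residual_of_dense_open (hTclosed p).isOpen_compl
      (interior_eq_empty_iff_dense_compl.1 (hTint p))
  have hmeagre : IsMeagre (⋃ p : ↥C × ℕ, T p) := by
    rw [IsMeagre, compl_iUnion]
    exact countable_iInter_mem.mpr hTmeagre
  rw [hSeq]
  refine ⟨hmeagre, dense_of_mem_residual hmeagre, ?_⟩
  rw [compl_iUnion]
  exact IsGδ.iInter fun p => (hTclosed p).isOpen_compl.isGδ
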